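/- Let A = R(x;σ,δ) with σ an automorphism and δ a locally nilpotent σ-derivation. If M is a simple right R-module and Q is an A-submodule of the inverse polynomial module M[x⁻¹] containing elements of arbitrarily negative degree, then Q = M[x⁻¹]. In particular, if M is simple then M[x⁻¹] is a hollow A-module. -/

import Mathlib

open MulOpposite Finsupp

/-- The skew Ore polynomial ring `A = R(x;σ,δ)` of Higuera–Reyes: `σ` is an
automorphism of `R`, `δ` a locally nilpotent `σ`-derivation, `A` is a free left
`R`-module with basis `{xᵏ}` and commutation rule
`x·r = σ(r)x + σδ(r)x² + ⋯ + σδ^{n(r)-1}(r)x^{n(r)}` (i.e. `xr = σ(r)x + xδ(r)x`). -/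
structure SkewOreRing (R A : Type*) [Ring R] [Ring A] (σ : R ≃+* R) (δ : R → R) where
  φ : R →+* A
  x : A
  deriv_add : ∀ r s : R, δ (r + s) = δ r + δ s
  deriv_mul : ∀ r s : R, δ (r * s) = σ r * δ s + δ r * s
  locNilp : ∀ r : R, ∃ n : ℕ, 1 ≤ n ∧ δ^[n] r = 0
  basis : Function.Bijective
    (fun f : ℕ →₀ R => f.sum fun k r => φ r * x ^ k)
  comm : ∀ (r : R) (n : ℕ), δ^[n] r = 0 →
    x * φ r = ∑ i ∈ Finset.range n, φ (σ (δ^[i] r)) * x ^ (i + 1)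

/-- `fWord σ' δ' k i` is the sum of all words in `σ'`, `δ'` with `k` letters,
`i` of which are `σ'` (the maps `f_k^i` governing `x^{-k}·r = Σ f_k^i(r)x^{-i}`). -/
def fWord {R : Type*} [Ring R] (σ' δ' : R → R) : ℕ → ℕ → R → R
  | 0, 0 => id
  | 0, _ + 1 => 0
  | k + 1, 0 => fun r => δ' (fWord σ' δ' k 0 r)
  | k + 1, i + 1 => fun r => σ' (fWord σ' δ' k i r) + δ' (fWord σ' δ' k (i + 1) r)

/-- The inverse polynomial module `M[x⁻¹]`, realized on `ℕ →₀ M` (`single k m`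
is `m·x^{-k}`), as a right `A`-module: the action satisfies
`m x^{-k}·x = m x^{-(k-1)}` (and `0` for `k = 0`) and
`m x^{-k}·r = Σ_{i≤k} m f_k^i(r) x^{-i}` where the `f_k^i` are built from
`σ' = σ⁻¹` and `δ' = -δσ⁻¹`. -/
structure IsInvPolyModule {R A : Type*} [Ring R] [Ring A] {σ : R ≃+* R} {δ : R → R}
    (S : SkewOreRing R A σ δ) (M : Type*) [AddCommGroup M] [Module Rᵐᵒᵖ M]
    [Module Aᵐᵒᵖ (ℕ →₀ M)] : Prop where
  smul_x_succ : ∀ (k : ℕ) (m : M),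
    op S.x • (single (k + 1) m : ℕ →₀ M) = single k m
  smul_x_zero : ∀ m : M, op S.x • (single 0 m : ℕ →₀ M) = 0
  smul_coeff : ∀ (k : ℕ) (m : M) (r : R),
    op (S.φ r) • (single k m : ℕ →₀ M) =
      ∑ i ∈ Finset.range (k + 1),
        single i (op (fWord (⇑σ.symm) (fun t => -δ (σ.symm t)) k i r) • m)

/-- `N` is a small (superfluous) submodule. -/
def IsSmallSub (S : Type*) [Ring S] (Mod : Type*) [AddCommGroup Mod] [Module S Mod]
    (N : Submodule S Mod) : Prop :=
  ∀ L : Submodule S Mod, N ⊔ L = ⊤ → L = ⊤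

/-- A hollow module: every proper submodule is small. -/
def IsHollowMod (S : Type*) [Ring S] (Mod : Type*) [AddCommGroup Mod] [Module S Mod] : Prop :=
  ∀ N : Submodule S Mod, N ≠ ⊤ → IsSmallSub S Mod N

/-- A Bass module: every proper submodule is contained in a maximal submodule. -/
def IsBassMod (S : Type*) [Ring S] (Mod : Type*) [AddCommGroup Mod] [Module S Mod] : Prop :=
  ∀ N : Submodule S Mod, N ≠ ⊤ → ∃ Q : Submodule S Mod, IsCoatom Q ∧ N ≤ Q

/-- An essential submodule: it meets `m·S` nontrivially for every nonzero `m`. -/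
def EssentialIn (S : Type*) [Ring S] (Mod : Type*) [AddCommGroup Mod] [Module S Mod]
    (E : Submodule S Mod) : Prop :=
  ∀ m : Mod, m ≠ 0 → ∃ s : S, s • m ∈ E ∧ s • m ≠ 0

/-- A uniform submodule: any two nonzero submodules contained in it intersect
nontrivially. -/
def UniformSub (S : Type*) [Ring S] (Mod : Type*) [AddCommGroup Mod] [Module S Mod]
    (U : Submodule S Mod) : Prop :=
  ∀ P Q : Submodule S Mod, P ≤ U → Q ≤ U → P ≠ ⊥ → Q ≠ ⊥ → P ⊓ Q ≠ ⊥

/-- `Mod` has uniform dimension `n`: there are `n` nonzero uniform submodules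
whose (independent) direct sum is essential in `Mod`. -/
def HasUdim (S : Type*) [Ring S] (Mod : Type*) [AddCommGroup Mod] [Module S Mod]
    (n : ℕ) : Prop :=
  ∃ U : Fin n → Submodule S Mod, (∀ i, U i ≠ ⊥) ∧ (∀ i, UniformSub S Mod (U i)) ∧
    iSupIndep U ∧ EssentialIn S Mod (⨆ i, U i)

/-- The couniform dimension (corank) of a module: the supremum of `k` such that
`Mod` surjects onto a direct sum of `k` nonzero modules (equivalently, onto
`⊕ᵢ Mod⧸Lᵢ` with all `Lᵢ` proper). -/
noncomputable def corank (S : Type*) [Ring S] (Mod : Type*) [AddCommGroup Mod]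
    [Module S Mod] : ℕ∞ :=
  sSup {c : ℕ∞ | ∃ k : ℕ, c = (k : ℕ∞) ∧ ∃ L : Fin k → Submodule S Mod,
    (∀ i, L i ≠ ⊤) ∧
    Function.Surjective (LinearMap.pi (fun i => (L i).mkQ) : Mod →ₗ[S] ∀ i, Mod ⧸ L i)}

/-- The `R`-module structure on `M[x⁻¹]` obtained by restricting the `A`-action
along `φ : R →+* A`; with respect to it, "`M[x⁻¹]` is a Bass right `R`-module". -/
def IsBassR {R A : Type*} [Ring R] [Ring A] {σ : R ≃+* R} {δ : R → R}
    (S : SkewOreRing R A σ δ) (M : Type*) [AddCommGroup M]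
    [Module Aᵐᵒᵖ (ℕ →₀ M)] : Prop :=
  letI : Module Rᵐᵒᵖ (ℕ →₀ M) := Module.compHom _ (RingHom.op S.φ)
  IsBassMod Rᵐᵒᵖ (ℕ →₀ M)

section Aux

variable {R A : Type*} [Ring R] [Ring A] {σ : R ≃+* R} {δ : R → R}
  (S : SkewOreRing R A σ δ) {M : Type*} [AddCommGroup M] [Module Rᵐᵒᵖ M]
  [Module Aᵐᵒᵖ (ℕ →₀ M)] (hinv : IsInvPolyModule S M)

lemma fWord_of_lt (σ' δ' : R → R) (h0σ : σ' 0 = 0) (h0δ : δ' 0 = 0) :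
    ∀ k i, k < i → ∀ r, fWord σ' δ' k i r = 0 := by
  intro k
  induction k with
  | zero =>
    intro i hi r
    obtain ⟨i', rfl⟩ := Nat.exists_eq_add_of_lt hi
    rfl
  | succ k ih =>
    intro i hi r
    obtain ⟨i', rfl⟩ := Nat.exists_eq_succ_of_ne_zero (by omega : i ≠ 0)
    show σ' (fWord σ' δ' k i' r) + δ' (fWord σ' δ' k (i' + 1) r) = 0
    rw [ih i' (by omega) r, ih (i' + 1) (by omega) r, h0σ, h0δ, add_zero]

lemma fWord_diag (σ' δ' : R → R) (h0σ : σ' 0 = 0) (h0δ : δ' 0 = 0) :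
    ∀ k r, fWord σ' δ' k k r = σ'^[k] r := by
  intro k
  induction k with
  | zero => intro r; rfl
  | succ k ih =>
    intro r
    show σ' (fWord σ' δ' k k r) + δ' (fWord σ' δ' k (k + 1) r) = σ'^[k + 1] r
    rw [ih, fWord_of_lt σ' δ' h0σ h0δ k (k + 1) (by omega), h0δ, add_zero,
      Function.iterate_succ_apply']

include S in
lemma skewDeriv_zero : δ 0 = 0 := by
  have h := S.deriv_add 0 0
  rw [add_zero] at h
  exact (left_eq_add.1 h)

include S hinv in
lemma coeff_x_smul (p : ℕ →₀ M) (t : ℕ) : (op S.x • p) t = p (t + 1) := by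
  induction p using Finsupp.induction with
  | zero => simp
  | single_add a b f ha hb ih =>
    rw [smul_add, Finsupp.add_apply, Finsupp.add_apply, ih]
    congr 1
    cases a with
    | zero => rw [hinv.smul_x_zero]; simp [Finsupp.single_apply]
    | succ a => rw [hinv.smul_x_succ]; simp [Finsupp.single_apply]

include S hinv in
lemma coeff_xpow_smul (n : ℕ) (p : ℕ →₀ M) (t : ℕ) :
    ((op S.x) ^ n • p) t = p (t + n) := by
  induction n generalizing p t with
  | zero => simp
  | succ n ih =>
    rw [pow_succ, mul_smul, ih, coeff_x_smul S hinv, Nat.add_assoc]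

include S hinv in
lemma key (hsimple : IsSimpleModule Rᵐᵒᵖ M) (Q : Submodule Aᵐᵒᵖ (ℕ →₀ M))
    (hQ : ∀ k : ℕ, ∃ p ∈ Q, ∃ j : ℕ, k ≤ j ∧ p j ≠ 0) : Q = ⊤ := by
  have h0σ : (⇑σ.symm : R → R) 0 = 0 := map_zero _
  have h0δ : (fun t => -δ (σ.symm t)) 0 = 0 := by
    simp only [map_zero, skewDeriv_zero S, neg_zero]
  have hsingle : ∀ k : ℕ, ∀ m : M, (single k m : ℕ →₀ M) ∈ Q := by
    intro k
    induction k using Nat.strong_induction_on with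
    | _ k IH =>
      obtain ⟨p, hp, j, hkj, hpj⟩ := hQ k
      have hjmem : j ∈ p.support := Finsupp.mem_support_iff.2 hpj
      set J := p.support.max' ⟨j, hjmem⟩ with hJdef
      have hJmem : J ∈ p.support := p.support.max'_mem _
      have hkJ : k ≤ J := le_trans hkj (p.support.le_max' j hjmem)
      set q := (op S.x) ^ (J - k) • p with hqdef
      have hqQ : q ∈ Q := Q.smul_mem _ hp
      have hqc : ∀ t, q t = p (t + (J - k)) := fun t => coeff_xpow_smul S hinv _ p t
      have hqk : q k ≠ 0 := by
        rw [hqc, Nat.add_sub_cancel' hkJ]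
        exact Finsupp.mem_support_iff.1 hJmem
      have hqt : ∀ t, k < t → q t = 0 := by
        intro t ht
        rw [hqc]
        by_contra h
        have := p.support.le_max' _ (Finsupp.mem_support_iff.2 h)
        omega
      -- first, `single k (q k) ∈ Q`
      have hqkQ : (single k (q k) : ℕ →₀ M) ∈ Q := by
        have hmem : k ∈ q.support := Finsupp.mem_support_iff.2 hqk
        have h1 : (single k (q k) : ℕ →₀ M)
            + ∑ t ∈ q.support.erase k, single t (q t) = q := by
          rw [Finset.add_sum_erase _ (fun t => (single t (q t) : ℕ →₀ M)) hmem]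
          exact Finsupp.sum_single q
        have hrepr : (single k (q k) : ℕ →₀ M)
            = q - ∑ t ∈ q.support.erase k, single t (q t) :=
          eq_sub_of_add_eq h1
        rw [hrepr]
        refine Submodule.sub_mem _ hqQ (Submodule.sum_mem _ ?_)
        intro t ht
        have htk : t ≠ k := (Finset.mem_erase.1 ht).1
        have htle : t ≤ k := by
          by_contra h
          exact Finsupp.mem_support_iff.1 (Finset.mem_erase.1 ht).2 (hqt t (by omega))
        exact IH t (by omega) _
      -- now an arbitrary `m`
      intro m
      have hspan : Submodule.span Rᵐᵒᵖ {q k} = ⊤ := by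
        rcases eq_bot_or_eq_top (Submodule.span Rᵐᵒᵖ {q k}) with h | h
        · exact absurd (Submodule.span_singleton_eq_bot.1 h) hqk
        · exact h
      have hmm : m ∈ Submodule.span Rᵐᵒᵖ {q k} := by rw [hspan]; trivial
      obtain ⟨r', hr'⟩ := Submodule.mem_span_singleton.1 hmm
      obtain ⟨r'', rfl⟩ : ∃ r'', op r'' = r' := ⟨r'.unop, rfl⟩
      set r := (⇑σ)^[k] r'' with hrdef
      have hfr : fWord (⇑σ.symm) (fun t => -δ (σ.symm t)) k k r = r'' := by
        rw [fWord_diag _ _ h0σ h0δ]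
        exact (Function.LeftInverse.iterate σ.symm_apply_apply k) r''
      have hsc := hinv.smul_coeff k (q k) r
      rw [Finset.sum_range_succ, hfr, hr'] at hsc
      have hrepr2 : (single k m : ℕ →₀ M) = op (S.φ r) • single k (q k)
          - ∑ i ∈ Finset.range k,
            single i (op (fWord (⇑σ.symm) (fun t => -δ (σ.symm t)) k i r) • q k) := by
        rw [hsc]; abel
      rw [hrepr2]
      refine Submodule.sub_mem _ (Q.smul_mem _ hqkQ) (Submodule.sum_mem _ ?_)
      intro i hi
      exact IH i (Finset.mem_range.1 hi) _
  rw [eq_top_iff]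
  intro p _
  rw [← Finsupp.sum_single p, Finsupp.sum]
  exact Submodule.sum_mem _ fun t _ => hsingle t (p t)

end Aux

/-- If `M` is a simple right `R`-module and `Q` is an `A`-submodule of
`M[x⁻¹]` containing inverse polynomials of arbitrarily negative degree, then
`Q = M[x⁻¹]`; in particular `M[x⁻¹]` is a hollow `A`-module. -/
theorem stmt15 (R A : Type*) [Ring R] [Ring A] (σ : R ≃+* R) (δ : R → R)
    (S : SkewOreRing R A σ δ) (M : Type*) [AddCommGroup M] [Module Rᵐᵒᵖ M]
    [Module Aᵐᵒᵖ (ℕ →₀ M)] (hinv : IsInvPolyModule S M)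
    (hsimple : IsSimpleModule Rᵐᵒᵖ M)
    (Q : Submodule Aᵐᵒᵖ (ℕ →₀ M))
    (hQ : ∀ k : ℕ, ∃ p ∈ Q, ∃ j : ℕ, k ≤ j ∧ p j ≠ 0) :
    Q = ⊤ ∧ IsHollowMod Aᵐᵒᵖ (ℕ →₀ M) := by
  refine ⟨key S hinv hsimple Q hQ, ?_⟩
  intro N hN L hNL
  by_cases hL : ∀ k : ℕ, ∃ p ∈ L, ∃ j : ℕ, k ≤ j ∧ p j ≠ 0
  · exact key S hinv hsimple L hL
  · push_neg at hL
    obtain ⟨k, hk⟩ := hL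
    exfalso
    apply hN
    apply key S hinv hsimple N
    intro K
    have : Nontrivial M := IsSimpleModule.nontrivial Rᵐᵒᵖ M
    obtain ⟨m, hm⟩ := exists_ne (0 : M)
    have hmem : (single (max k K) m : ℕ →₀ M) ∈ N ⊔ L := by rw [hNL]; trivial
    obtain ⟨n, hn, l, hl, hnl⟩ := Submodule.mem_sup.1 hmem
    refine ⟨n, hn, max k K, le_max_right _ _, ?_⟩
    have hl0 : l (max k K) = 0 := hk l hl _ (le_max_left _ _)
    have hnK : n (max k K) = m := by
      have h := congrArg (fun f : ℕ →₀ M => f (max k K)) hnl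
      simpa [Finsupp.single_eq_same, hl0] using h
    rw [hnK]
    exact hm
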